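/- Let Γ be a unit vector in a bipartite Hilbert space with Schmidt coefficients λ₁ ≥ λ₂ ≥ … ≥ 0, and let φ be any unit vector of Schmidt rank at most r. Then |⟨Γ|φ⟩|² ≤ Σ_{i=1}^r λᵢ². -/

import Mathlib

open Matrix Finset

private lemma quad_swap {A B C D : Type*} [Fintype A] [Fintype B] [Fintype C] [Fintype D]
    (F : A → B → C → D → ℂ) :
    ∑ x : A, ∑ y : B, ∑ j : C, ∑ i : D, F x y j i
      = ∑ i : D, ∑ j : C, ∑ y : B, ∑ x : A, F x y j i :=
  calc ∑ x : A, ∑ y : B, ∑ j : C, ∑ i : D, F x y j i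
      = ∑ x : A, ∑ y : B, ∑ i : D, ∑ j : C, F x y j i :=
        Finset.sum_congr rfl fun _ _ => Finset.sum_congr rfl fun _ _ => Finset.sum_comm
    _ = ∑ x : A, ∑ i : D, ∑ y : B, ∑ j : C, F x y j i :=
        Finset.sum_congr rfl fun _ _ => Finset.sum_comm
    _ = ∑ i : D, ∑ x : A, ∑ y : B, ∑ j : C, F x y j i := Finset.sum_comm
    _ = ∑ i : D, ∑ x : A, ∑ j : C, ∑ y : B, F x y j i :=
        Finset.sum_congr rfl fun _ _ => Finset.sum_congr rfl fun _ _ => Finset.sum_comm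
    _ = ∑ i : D, ∑ j : C, ∑ x : A, ∑ y : B, F x y j i :=
        Finset.sum_congr rfl fun _ _ => Finset.sum_comm
    _ = ∑ i : D, ∑ j : C, ∑ y : B, ∑ x : A, F x y j i :=
        Finset.sum_congr rfl fun _ _ => Finset.sum_congr rfl fun _ _ => Finset.sum_comm

/-- Expansion of the dot product of two bipartite vectors given in sum-of-products form. -/
lemma dot_expand {m n s s' : ℕ}
    (u : Fin s → Fin m → ℂ) (v : Fin s → Fin n → ℂ)
    (u' : Fin s' → Fin m → ℂ) (v' : Fin s' → Fin n → ℂ) :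
    star (fun p : Fin m × Fin n => ∑ i, u i p.1 * v i p.2) ⬝ᵥ
      (fun p : Fin m × Fin n => ∑ j, u' j p.1 * v' j p.2)
    = ∑ i, ∑ j, (star (u i) ⬝ᵥ u' j) * (star (v i) ⬝ᵥ v' j) := by
  simp only [dotProduct, Pi.star_apply, Fintype.sum_prod_type, star_sum, star_mul',
    Finset.sum_mul, Finset.mul_sum]
  rw [quad_swap]
  refine Finset.sum_congr rfl fun i _ => ?_
  refine Finset.sum_congr rfl fun j _ => ?_
  refine Finset.sum_congr rfl fun y _ => Finset.sum_congr rfl fun x _ => ?_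
  ring

lemma card_filter_lt (N r : ℕ) :
    (Finset.univ.filter (fun i : Fin N => (i : ℕ) < r)).card = min r N := by
  rcases le_or_gt N r with h | h
  · have he : (Finset.univ.filter (fun i : Fin N => (i : ℕ) < r)) = Finset.univ := by
      refine Finset.filter_true_of_mem fun i _ => lt_of_lt_of_le i.isLt h
    simp [he, Nat.min_eq_right h]
  · have he : (Finset.univ.filter (fun i : Fin N => (i : ℕ) < r)) =
        Finset.map (Fin.castLEEmb h.le) Finset.univ := by
      ext i
      simp only [Finset.mem_filter, Finset.mem_univ, true_and, Finset.mem_map]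
      constructor
      · intro hi; exact ⟨⟨i, hi⟩, by simp [Fin.castLEEmb, Fin.ext_iff]⟩
      · rintro ⟨j, rfl⟩; simpa [Fin.castLEEmb] using j.isLt
    simp [he, Nat.min_eq_left h.le]

/-- The rearrangement step: for a decreasing sequence of nonnegative reals and weights
`t i ∈ [0,1]` summing to at most `r`, the weighted sum of squares is bounded by the sum of
the first `r` squares. -/
lemma rearrange (N r : ℕ) (lam : Fin N → ℝ) (hnn : ∀ i, 0 ≤ lam i)
    (hmono : ∀ i j : Fin N, i ≤ j → lam j ≤ lam i)
    (t : Fin N → ℝ) (ht0 : ∀ i, 0 ≤ t i) (ht1 : ∀ i, t i ≤ 1)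
    (htsum : ∑ i, t i ≤ r) :
    ∑ i, lam i ^ 2 * t i ≤ ∑ i ∈ Finset.univ.filter (fun i : Fin N => (i : ℕ) < r), lam i ^ 2 := by
  classical
  set S := Finset.univ.filter (fun i : Fin N => (i : ℕ) < r) with hS
  set Sc := Finset.univ.filter (fun i : Fin N => ¬ (i : ℕ) < r) with hSc
  set μ : ℝ := if h : r < N then lam ⟨r, h⟩ ^ 2 else 0 with hμ
  have hμ0 : 0 ≤ μ := by
    rw [hμ]; split
    · positivity
    · exact le_refl 0
  have hub : ∀ i : Fin N, i ∈ Sc → lam i ^ 2 * t i ≤ μ * t i := by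
    intro i hi
    have hi' : r ≤ (i : ℕ) := by simpa [hSc] using hi
    have hrN : r < N := lt_of_le_of_lt hi' i.isLt
    have : lam i ^ 2 ≤ μ := by
      rw [hμ, dif_pos hrN]
      exact pow_le_pow_left₀ (hnn i) (hmono ⟨r, hrN⟩ i (by simpa [Fin.le_def] using hi')) 2
    exact mul_le_mul_of_nonneg_right this (ht0 i)
  have hlb : ∀ i : Fin N, i ∈ S → lam i ^ 2 * t i ≤ lam i ^ 2 + μ * (t i - 1) := by
    intro i hi
    have hi' : (i : ℕ) < r := by simpa [hS] using hi
    have hμle : μ ≤ lam i ^ 2 := by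
      rw [hμ]; split
      · next h =>
          exact pow_le_pow_left₀ (hnn _) (hmono i ⟨r, h⟩ (by simpa [Fin.le_def] using hi'.le)) 2
      · positivity
    nlinarith [ht1 i, ht0 i]
  have hsplit : ∑ i, lam i ^ 2 * t i = ∑ i ∈ S, lam i ^ 2 * t i + ∑ i ∈ Sc, lam i ^ 2 * t i :=
    (Finset.sum_filter_add_sum_filter_not Finset.univ _ _).symm
  have htsplit : ∑ i ∈ S, t i + ∑ i ∈ Sc, t i = ∑ i, t i :=
    Finset.sum_filter_add_sum_filter_not Finset.univ _ _
  have hfinal : μ * ((∑ i, t i) - S.card) ≤ 0 := by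
    by_cases hrN : r < N
    · have hcard : (S.card : ℝ) = r := by
        rw [hS, card_filter_lt, Nat.min_eq_left hrN.le]
      apply mul_nonpos_of_nonneg_of_nonpos hμ0
      rw [hcard]; linarith
    · rw [hμ, dif_neg hrN]; simp
  calc ∑ i, lam i ^ 2 * t i
      = ∑ i ∈ S, lam i ^ 2 * t i + ∑ i ∈ Sc, lam i ^ 2 * t i := hsplit
    _ ≤ (∑ i ∈ S, (lam i ^ 2 + μ * (t i - 1))) + ∑ i ∈ Sc, μ * t i :=
        add_le_add (Finset.sum_le_sum hlb) (Finset.sum_le_sum hub)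
    _ = (∑ i ∈ S, lam i ^ 2) + μ * ((∑ i, t i) - S.card) := by
        rw [Finset.sum_add_distrib]
        rw [← Finset.mul_sum, ← Finset.mul_sum, ← htsplit]
        have : ∑ i ∈ S, (t i - 1) = (∑ i ∈ S, t i) - S.card := by
          rw [Finset.sum_sub_distrib, Finset.sum_const, nsmul_eq_mul, mul_one]
        rw [this]; ring
    _ ≤ ∑ i ∈ S, lam i ^ 2 := by linarith

/-- Reinterpret a plain vector as an element of Euclidean space. -/
def toEuc {n : ℕ} (v : Fin n → ℂ) : EuclideanSpace ℂ (Fin n) := WithLp.toLp 2 v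

lemma inner_toEuc {n : ℕ} (x y : Fin n → ℂ) :
    (inner ℂ (toEuc x) (toEuc y) : ℂ) = star x ⬝ᵥ y := by
  simp [toEuc, dotProduct, PiLp.inner_apply, RCLike.inner_apply, mul_comm]

lemma norm_sq_toEuc {n : ℕ} (x : Fin n → ℂ) :
    ‖toEuc x‖ ^ 2 = (star x ⬝ᵥ x).re := by
  rw [← inner_self_eq_norm_sq (𝕜 := ℂ), inner_toEuc]; rfl

/-- Bessel's inequality phrased with dot products. -/
lemma bessel_dot {n N : ℕ} (R : Fin N → Fin n → ℂ)
    (hRorth : ∀ i j, star (R i) ⬝ᵥ R j = if i = j then 1 else 0)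
    (x : Fin n → ℂ) :
    ∑ i, ‖star (R i) ⬝ᵥ x‖ ^ 2 ≤ (star x ⬝ᵥ x).re := by
  have hon : Orthonormal ℂ (fun i => toEuc (R i)) := by
    rw [orthonormal_iff_ite]
    intro i j
    rw [inner_toEuc]
    exact hRorth i j
  have hb := hon.sum_inner_products_le (toEuc x) (s := Finset.univ)
  calc ∑ i, ‖star (R i) ⬝ᵥ x‖ ^ 2
      = ∑ i, ‖(inner ℂ (toEuc (R i)) (toEuc x) : ℂ)‖ ^ 2 := by
        refine Finset.sum_congr rfl fun i _ => ?_
        rw [inner_toEuc]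
    _ ≤ ‖toEuc x‖ ^ 2 := hb
    _ = (star x ⬝ᵥ x).re := norm_sq_toEuc x

/-- Any family of `r` vectors can be expressed via an orthonormal family of at most `r`
vectors. -/
lemma exists_on_decomp {n r : ℕ} (b : Fin r → Fin n → ℂ) :
    ∃ (d : ℕ), d ≤ r ∧ ∃ (w : Fin d → Fin n → ℂ) (c : Fin r → Fin d → ℂ),
      (∀ k l, star (w k) ⬝ᵥ w l = if k = l then 1 else 0) ∧
      ∀ j, b j = fun y => ∑ k, c j k * w k y := by
  classical
  set W : Submodule ℂ (EuclideanSpace ℂ (Fin n)) :=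
    Submodule.span ℂ (Set.range (fun j => toEuc (b j))) with hW
  have hd : Module.finrank ℂ W ≤ r := by
    refine (finrank_span_le_card _).trans ?_
    rw [Set.toFinset_card]
    exact (Fintype.card_range_le _).trans (by simp)
  set d := Module.finrank ℂ W with hdd
  set o := stdOrthonormalBasis ℂ W with ho
  refine ⟨d, hd, fun k => ((o k : W) : EuclideanSpace ℂ (Fin n)),
    fun j k => o.repr ⟨toEuc (b j), Submodule.subset_span ⟨j, rfl⟩⟩ k, ?_, ?_⟩
  · intro k l
    rw [← inner_toEuc]
    have h := orthonormal_iff_ite.mp o.orthonormal k l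
    rw [Submodule.coe_inner] at h
    exact h
  · intro j
    set x : W := ⟨toEuc (b j), Submodule.subset_span ⟨j, rfl⟩⟩ with hx
    have h1 : ∑ k, o.repr x k • o k = x := o.sum_repr x
    have h2 : ∑ k, o.repr x k • ((o k : W) : EuclideanSpace ℂ (Fin n)) = toEuc (b j) := by
      have := congrArg Subtype.val h1
      simpa using this
    funext y
    have := congrFun ((WithLp.linearEquiv 2 ℂ (Fin n → ℂ)).congr_arg h2.symm) y
    simpa [map_sum, WithLp.linearEquiv, toEuc, hx] using this

/-- Eckart–Young-type overlap bound: the squared overlap of a unit vector `Γ` with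
Schmidt coefficients `λ₁ ≥ λ₂ ≥ …` against any unit vector `φ` of Schmidt rank at most
`r` is bounded by the sum of the first `r` squared Schmidt coefficients of `Γ`. -/
theorem eckart_young_overlap (m n N r : ℕ)
    (lam : Fin N → ℝ) (hnonneg : ∀ i, 0 ≤ lam i)
    (hmono : ∀ i j : Fin N, i ≤ j → lam j ≤ lam i)
    (L : Fin N → Fin m → ℂ) (R : Fin N → Fin n → ℂ)
    (hLorth : ∀ i j, star (L i) ⬝ᵥ L j = if i = j then 1 else 0)
    (hRorth : ∀ i j, star (R i) ⬝ᵥ R j = if i = j then 1 else 0)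
    (Γ : Fin m × Fin n → ℂ)
    (hΓ : Γ = fun p => ∑ i, (lam i : ℂ) * L i p.1 * R i p.2)
    (hΓunit : star Γ ⬝ᵥ Γ = 1)
    (φ : Fin m × Fin n → ℂ) (hφunit : star φ ⬝ᵥ φ = 1)
    (a : Fin r → Fin m → ℂ) (b : Fin r → Fin n → ℂ)
    (hφ : φ = fun p => ∑ i, a i p.1 * b i p.2) :
    ‖star Γ ⬝ᵥ φ‖ ^ 2 ≤ ∑ i ∈ Finset.univ.filter (fun i : Fin N => (i : ℕ) < r), lam i ^ 2 := by
  classical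
  obtain ⟨d, hd, w, c, hworth, hb⟩ := exists_on_decomp b
  -- rewrite φ with orthonormal right factors
  set A : Fin d → Fin m → ℂ := fun k x => ∑ j, c j k * a j x with hA
  have hφA : φ = fun p => ∑ k, A k p.1 * w k p.2 := by
    rw [hφ]; funext p
    simp only [hb, hA]
    calc ∑ j, a j p.1 * ∑ k, c j k * w k p.2
        = ∑ j, ∑ k, a j p.1 * (c j k * w k p.2) := by
          refine Finset.sum_congr rfl fun j _ => ?_; rw [Finset.mul_sum]
      _ = ∑ k, ∑ j, a j p.1 * (c j k * w k p.2) := Finset.sum_comm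
      _ = ∑ k, (∑ j, c j k * a j p.1) * w k p.2 := by
          refine Finset.sum_congr rfl fun k _ => ?_
          rw [Finset.sum_mul]
          refine Finset.sum_congr rfl fun j _ => ?_
          ring
  set α : Fin N → Fin d → ℂ := fun i k => star (L i) ⬝ᵥ A k with hα
  set β : Fin N → Fin d → ℂ := fun i k => star (R i) ⬝ᵥ w k with hβ
  -- the overlap in terms of α, β
  have hdot : star Γ ⬝ᵥ φ = ∑ i, ∑ k, (lam i : ℂ) * (α i k * β i k) := by
    rw [hΓ, hφA]
    calc star (fun p : Fin m × Fin n => ∑ i, (lam i : ℂ) * L i p.1 * R i p.2) ⬝ᵥ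
          (fun p : Fin m × Fin n => ∑ k, A k p.1 * w k p.2)
        = ∑ i, ∑ k, (star (fun x => (lam i : ℂ) * L i x) ⬝ᵥ A k) * (star (R i) ⬝ᵥ w k) :=
          dot_expand (fun i x => (lam i : ℂ) * L i x) R A w
      _ = ∑ i, ∑ k, (lam i : ℂ) * (α i k * β i k) := by
          refine Finset.sum_congr rfl fun i _ => Finset.sum_congr rfl fun k _ => ?_
          have : star (fun x => (lam i : ℂ) * L i x) ⬝ᵥ A k = (lam i : ℂ) * (star (L i) ⬝ᵥ A k) := by
            simp [dotProduct, star_mul', Complex.conj_ofReal, Finset.mul_sum, mul_assoc]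
          rw [this, hα, hβ]
          ring
  -- norm of φ in terms of A
  have n1 : ∑ k, star (A k) ⬝ᵥ A k = 1 := by
    have e : star φ ⬝ᵥ φ = ∑ k, ∑ l, (star (A k) ⬝ᵥ A l) * (star (w k) ⬝ᵥ w l) := by
      rw [hφA]; exact dot_expand A w A w
    rw [hφunit] at e
    have e2 : ∑ k, ∑ l, (star (A k) ⬝ᵥ A l) * (star (w k) ⬝ᵥ w l) = ∑ k, star (A k) ⬝ᵥ A k := by
      refine Finset.sum_congr rfl fun k _ => ?_
      rw [Finset.sum_eq_single k]
      · rw [hworth k k, if_pos rfl, mul_one]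
      · intro l _ hl
        rw [hworth k l, if_neg (Ne.symm hl), mul_zero]
      · intro h; exact absurd (Finset.mem_univ k) h
    rw [e2] at e
    exact e.symm
  set Sa : Fin N → ℝ := fun i => ∑ k, ‖α i k‖ ^ 2 with hSa
  set Sb : Fin N → ℝ := fun i => ∑ k, ‖β i k‖ ^ 2 with hSb
  have hSa0 : ∀ i, 0 ≤ Sa i := fun i => Finset.sum_nonneg fun k _ => by positivity
  have hSb0 : ∀ i, 0 ≤ Sb i := fun i => Finset.sum_nonneg fun k _ => by positivity
  -- ∑ Sa ≤ 1
  have hSa1 : ∑ i, Sa i ≤ 1 := by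
    calc ∑ i, Sa i = ∑ k, ∑ i, ‖α i k‖ ^ 2 := Finset.sum_comm
      _ ≤ ∑ k, (star (A k) ⬝ᵥ A k).re :=
          Finset.sum_le_sum fun k _ => bessel_dot L hLorth (A k)
      _ = (∑ k, star (A k) ⬝ᵥ A k).re := by rw [Complex.re_sum]
      _ = 1 := by rw [n1]; rfl
  -- each Sb i ≤ 1
  have hSb1 : ∀ i, Sb i ≤ 1 := by
    intro i
    have hconj : ∀ k, ‖β i k‖ = ‖star (w k) ⬝ᵥ R i‖ := by
      intro k
      have : star (w k) ⬝ᵥ R i = (starRingEnd ℂ) (star (R i) ⬝ᵥ w k) := by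
        simp [dotProduct, map_sum, mul_comm]
      rw [this, Complex.norm_conj, hβ]
    calc Sb i = ∑ k, ‖star (w k) ⬝ᵥ R i‖ ^ 2 := by
          refine Finset.sum_congr rfl fun k _ => by rw [hconj k]
      _ ≤ (star (R i) ⬝ᵥ R i).re := bessel_dot w hworth (R i)
      _ = 1 := by rw [hRorth i i, if_pos rfl]; rfl
  -- ∑ Sb ≤ r
  have hSbr : ∑ i, Sb i ≤ (r : ℝ) := by
    calc ∑ i, Sb i = ∑ k, ∑ i, ‖β i k‖ ^ 2 := Finset.sum_comm
      _ ≤ ∑ k : Fin d, (star (w k) ⬝ᵥ w k).re :=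
          Finset.sum_le_sum fun k _ => bessel_dot R hRorth (w k)
      _ = ∑ k : Fin d, 1 := by
          refine Finset.sum_congr rfl fun k _ => by rw [hworth k k, if_pos rfl]; rfl
      _ = (d : ℝ) := by simp
      _ ≤ (r : ℝ) := by exact_mod_cast hd
  -- triangle + Cauchy–Schwarz in k
  have h0 : ‖star Γ ⬝ᵥ φ‖ ≤ ∑ i, lam i * (Real.sqrt (Sa i) * Real.sqrt (Sb i)) := by
    rw [hdot]
    calc ‖∑ i, ∑ k, (lam i : ℂ) * (α i k * β i k)‖
        ≤ ∑ i, ‖∑ k, (lam i : ℂ) * (α i k * β i k)‖ :=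
          norm_sum_le _ _
      _ ≤ ∑ i, lam i * (Real.sqrt (Sa i) * Real.sqrt (Sb i)) := by
          refine Finset.sum_le_sum fun i _ => ?_
          calc ‖∑ k, (lam i : ℂ) * (α i k * β i k)‖
              ≤ ∑ k, ‖(lam i : ℂ) * (α i k * β i k)‖ := norm_sum_le _ _
            _ = ∑ k, lam i * (‖α i k‖ * ‖β i k‖) := by
                refine Finset.sum_congr rfl fun k _ => ?_
                rw [norm_mul, norm_mul, Complex.norm_real, Real.norm_eq_abs, abs_of_nonneg (hnonneg i)]
            _ = lam i * ∑ k, ‖α i k‖ * ‖β i k‖ := by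
                rw [Finset.mul_sum]
            _ ≤ lam i * (Real.sqrt (Sa i) * Real.sqrt (Sb i)) := by
                refine mul_le_mul_of_nonneg_left ?_ (hnonneg i)
                have hcs := Finset.sum_mul_sq_le_sq_mul_sq Finset.univ
                  (fun k => ‖α i k‖) (fun k => ‖β i k‖)
                have hnn : 0 ≤ ∑ k, ‖α i k‖ * ‖β i k‖ :=
                  Finset.sum_nonneg fun k _ => by positivity
                rw [← Real.sqrt_mul (hSa0 i)]
                rw [show ∑ k, ‖α i k‖ * ‖β i k‖
                    = Real.sqrt ((∑ k, ‖α i k‖ * ‖β i k‖) ^ 2) by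
                  rw [Real.sqrt_sq hnn]]
                exact Real.sqrt_le_sqrt (by simpa [hSa, hSb] using hcs)
  have hsum0 : 0 ≤ ∑ i, lam i * (Real.sqrt (Sa i) * Real.sqrt (Sb i)) :=
    Finset.sum_nonneg fun i _ => by
      have := hnonneg i; positivity
  -- final chain
  calc ‖star Γ ⬝ᵥ φ‖ ^ 2
      ≤ (∑ i, lam i * (Real.sqrt (Sa i) * Real.sqrt (Sb i))) ^ 2 :=
        pow_le_pow_left₀ (norm_nonneg _) h0 2
    _ ≤ (∑ i, Real.sqrt (Sa i) ^ 2) * (∑ i, (lam i * Real.sqrt (Sb i)) ^ 2) := by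
        have hcs := Finset.sum_mul_sq_le_sq_mul_sq Finset.univ
          (fun i => Real.sqrt (Sa i)) (fun i => lam i * Real.sqrt (Sb i))
        calc (∑ i, lam i * (Real.sqrt (Sa i) * Real.sqrt (Sb i))) ^ 2
            = (∑ i, Real.sqrt (Sa i) * (lam i * Real.sqrt (Sb i))) ^ 2 := by
              congr 1; exact Finset.sum_congr rfl fun i _ => by ring
          _ ≤ (∑ i, Real.sqrt (Sa i) ^ 2) * (∑ i, (lam i * Real.sqrt (Sb i)) ^ 2) := hcs
    _ = (∑ i, Sa i) * (∑ i, lam i ^ 2 * Sb i) := by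
        congr 1
        · exact Finset.sum_congr rfl fun i _ => Real.sq_sqrt (hSa0 i)
        · refine Finset.sum_congr rfl fun i _ => ?_
          rw [mul_pow, Real.sq_sqrt (hSb0 i)]
    _ ≤ 1 * (∑ i, lam i ^ 2 * Sb i) := by
        refine mul_le_mul_of_nonneg_right hSa1 ?_
        exact Finset.sum_nonneg fun i _ => mul_nonneg (by positivity) (hSb0 i)
    _ = ∑ i, lam i ^ 2 * Sb i := one_mul _
    _ ≤ ∑ i ∈ Finset.univ.filter (fun i : Fin N => (i : ℕ) < r), lam i ^ 2 :=
        rearrange N r lam hnonneg hmono Sb hSb0 hSb1 hSbr
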